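/- For every c₁ > 0 there exist c₂ > 0 and x₀ > 0 such that for all real x ≥ x₀, exp(−x)·x^⌈c₁·x⌉ / (⌈c₁·x⌉)! ≥ exp(−c₂·x), where ⌈·⌉ denotes the ceiling and n! the factorial of the natural number n. -/
import Mathlib


open Real

/-- For every `c₁ > 0` there exist `c₂ > 0` and `x₀ > 0` such that for all `x ≥ x₀`,
`exp(−x)·x^⌈c₁·x⌉ / (⌈c₁·x⌉)! ≥ exp(−c₂·x)`. -/
theorem stmt_2 (c₁ : ℝ) (hc₁ : 0 < c₁) :
    ∃ c₂ : ℝ, 0 < c₂ ∧ ∃ x₀ : ℝ, 0 < x₀ ∧ ∀ x : ℝ, x₀ ≤ x →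
      Real.exp (-c₂ * x) ≤ Real.exp (-x) * x ^ (⌈c₁ * x⌉₊) / (Nat.factorial ⌈c₁ * x⌉₊) := by
  have hc1 : (0:ℝ) < c₁ + 1 := by linarith
  have hlog : 0 < Real.log (c₁ + 1) := Real.log_pos (by linarith)
  refine ⟨1 + (c₁ + 1) * Real.log (c₁ + 1), by positivity, 1, one_pos, ?_⟩
  intro x hx
  have hx0 : (0:ℝ) < x := by linarith
  set n := ⌈c₁ * x⌉₊ with hn
  have hn0 : 0 < n := Nat.ceil_pos.mpr (by positivity)
  have hnR : (0:ℝ) < (n:ℝ) := by exact_mod_cast hn0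
  have hnle : (n:ℝ) ≤ (c₁ + 1) * x := by
    have h1 : (n:ℝ) < c₁ * x + 1 := Nat.ceil_lt_add_one (by positivity)
    nlinarith
  have hdiv : 1 / (c₁ + 1) ≤ x / (n:ℝ) := by
    rw [div_le_div_iff₀ hc1 hnR]
    linarith
  have step1 : Real.exp (-((c₁+1) * Real.log (c₁+1)) * x) ≤ (x / (n:ℝ)) ^ n := by
    calc Real.exp (-((c₁+1) * Real.log (c₁+1)) * x)
        ≤ Real.exp ((n:ℝ) * (-Real.log (c₁+1))) := by
          apply Real.exp_le_exp.mpr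
          have : (n:ℝ) * Real.log (c₁+1) ≤ (c₁+1) * x * Real.log (c₁+1) :=
            mul_le_mul_of_nonneg_right hnle hlog.le
          nlinarith
      _ = (Real.exp (-Real.log (c₁+1))) ^ n := by rw [← Real.exp_nat_mul]
      _ = (1 / (c₁ + 1)) ^ n := by
          rw [Real.exp_neg, Real.exp_log hc1, one_div]
      _ ≤ (x / (n:ℝ)) ^ n := by
          apply pow_le_pow_left₀ (by positivity) hdiv
  have hfact : ((Nat.factorial n : ℝ)) ≤ (n:ℝ) ^ n := by
    exact_mod_cast Nat.factorial_le_pow n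
  have hfact0 : (0:ℝ) < (Nat.factorial n : ℝ) := by
    exact_mod_cast Nat.factorial_pos n
  have step2 : Real.exp (-x) * (x / (n:ℝ)) ^ n ≤ Real.exp (-x) * x ^ n / (Nat.factorial n) := by
    rw [div_pow, mul_div_assoc]
    gcongr

  calc Real.exp (-(1 + (c₁ + 1) * Real.log (c₁ + 1)) * x)
      = Real.exp (-x) * Real.exp (-((c₁+1) * Real.log (c₁+1)) * x) := by
        rw [← Real.exp_add]; ring_nf
    _ ≤ Real.exp (-x) * (x / (n:ℝ)) ^ n := by
        apply mul_le_mul_of_nonneg_left step1 (Real.exp_nonneg _)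
    _ ≤ _ := step2
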